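/- Let Ω ⊂ ℝ^N be a measurable set of finite positive Lebesgue measure, p > 2, q ∈ (2, p], p' = p/(p−1), and let T : L^{p'}(Ω) → L^{p}(Ω) be a compact linear operator. Let h : ℝ → ℝ be a continuous, odd, strictly increasing bijection of ℝ satisfying: |h(t)| ≤ a(1 + |t|^{1/(p−1)}) for all t and some a > 0; and there exist M₁, M₂, δ > 0 with |h(t)| ≥ M₁ |t|^{1/(p−1)} for |t| > δ and |h(t)| ≥ M₂ |t|^{1/(q−1)} for |t| ≤ δ. Set H(t) = ∫₀ᵗ h(s) ds and Ψ(w) = ∫_Ω H(w) dx − (1/2) ∫_Ω w·Tw dx, and assume there exist C > 0, C̃ ≥ 0 with H(t) − (1/2) h(t) t ≥ C |t|^{p/(p−1)} − C̃ for all t. Then every sequence {wₙ} ⊂ L^{p'}(Ω) with Ψ(wₙ) → c ∈ ℝ and sup_{‖η‖_{L^{p'}} ≤ 1} |∫_Ω (h(wₙ) − T wₙ) η dx| → 0 has a subsequence converging strongly in L^{p'}(Ω). -/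

import Mathlib

open MeasureTheory Filter Set
open scoped ENNReal

namespace Stmt13
variable {α : Type*} [MeasurableSpace α] {μ : Measure α}




lemma ofReal_div_eq {p : ℝ} (hp : 2 < p) :
    ENNReal.ofReal p / ENNReal.ofReal (p - 1) = ENNReal.ofReal (p / (p - 1)) :=
  (ENNReal.ofReal_div_of_pos (by linarith)).symm

lemma ofReal_conj_mul {p : ℝ} (hp : 2 < p) :
    ENNReal.ofReal (p / (p - 1)) * ENNReal.ofReal (p - 1) = ENNReal.ofReal p := by
  rw [← ENNReal.ofReal_mul (by
    have : (0:ℝ) < p - 1 := by linarith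
    positivity), div_mul_cancel₀]
  linarith

lemma one_div_conj_add {p : ℝ} (hp : 2 < p) :
    (1 : ℝ≥0∞) / ENNReal.ofReal p + 1 / ENNReal.ofReal (p / (p - 1)) = 1 := by
  have h1 : (0:ℝ) < p := by linarith
  have h1' : (0:ℝ) < p - 1 := by linarith
  have h2 : (0:ℝ) < p / (p-1) := div_pos h1 h1'
  rw [one_div, one_div, ← ENNReal.ofReal_inv_of_pos h1, ← ENNReal.ofReal_inv_of_pos h2,
    ← ENNReal.ofReal_add (by positivity) (by positivity)]
  have : p⁻¹ + (p / (p-1))⁻¹ = 1 := by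
    field_simp
    ring
  rw [this]
  simp

lemma conj_exp {p : ℝ} (hp : 2 < p) : Real.HolderConjugate p (p / (p - 1)) :=
  Real.HolderConjugate.conjExponent (by linarith)

/-- Hölder: product of L^p and L^{p'} functions is integrable. -/
lemma integrable_mul_conj {p : ℝ} (hp : 2 < p) {f g : α → ℝ}
    (hf : MemLp f (ENNReal.ofReal p) μ) (hg : MemLp g (ENNReal.ofReal (p / (p - 1))) μ) :
    Integrable (fun x => f x * g x) μ := by
  haveI : ENNReal.HolderTriple (ENNReal.ofReal p) (ENNReal.ofReal (p / (p - 1))) 1 :=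
    ⟨by simpa [one_div] using one_div_conj_add hp⟩
  have h := MeasureTheory.MemLp.smul (𝕜 := ℝ) (r := 1) hg hf
  rw [memLp_one_iff_integrable] at h
  exact h


lemma memLp_h_comp {p a : ℝ} {h : ℝ → ℝ} (hp : 2 < p) (hcont : Continuous h) (ha : 0 < a)
    (hgrowth : ∀ t : ℝ, |h t| ≤ a * (1 + |t| ^ (1 / (p - 1))))
    [IsFiniteMeasure μ] {f : α → ℝ} (hf : MemLp f (ENNReal.ofReal (p / (p - 1))) μ) :
    MemLp (fun x => h (f x)) (ENNReal.ofReal p) μ := by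
  have h1' : (0:ℝ) < p - 1 := by linarith
  have h2 := hf.norm_rpow_div (ENNReal.ofReal (1 / (p - 1)))
  rw [ENNReal.toReal_ofReal (by positivity), ← ENNReal.ofReal_div_of_pos (by positivity),
    show p / (p-1) / (1/(p-1)) = p by field_simp] at h2
  have hb : MemLp (fun x => a + a * ‖f x‖ ^ (1 / (p - 1))) (ENNReal.ofReal p) μ :=
    (memLp_const a).add (h2.const_mul a)
  refine MemLp.of_le hb (hcont.comp_aestronglyMeasurable hf.1) (ae_of_all _ fun x => ?_)
  have hnn : 0 ≤ a + a * ‖f x‖ ^ (1 / (p - 1)) := by positivity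
  rw [Real.norm_eq_abs, Real.norm_of_nonneg hnn]
  calc |h (f x)| ≤ a * (1 + |f x| ^ (1 / (p - 1))) := hgrowth _
    _ = a + a * ‖f x‖ ^ (1 / (p - 1)) := by rw [Real.norm_eq_abs]; ring

lemma H_even {h : ℝ → ℝ} (hodd : ∀ t : ℝ, h (-t) = - h t) (t : ℝ) :
    ∫ s in (0:ℝ)..(-t), h s = ∫ s in (0:ℝ)..t, h s := by
  have A := intervalIntegral.integral_comp_neg (a := (0:ℝ)) (b := t) h
  rw [neg_zero] at A
  have B : ∫ x in (0:ℝ)..t, h (-x) = - ∫ x in (0:ℝ)..t, h x := by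
    simp only [hodd, intervalIntegral.integral_neg]
  rw [B] at A
  have C : ∫ x in (0:ℝ)..(-t), h x = - ∫ x in (-t)..(0:ℝ), h x :=
    intervalIntegral.integral_symm (-t) 0
  linarith [A, C]

lemma H_bound {p a : ℝ} {h : ℝ → ℝ} (hp : 2 < p) (hcont : Continuous h) (ha : 0 < a)
    (hgrowth : ∀ t : ℝ, |h t| ≤ a * (1 + |t| ^ (1 / (p - 1))))
    (hodd : ∀ t : ℝ, h (-t) = - h t) (t : ℝ) :
    |∫ s in (0:ℝ)..t, h s| ≤ a * |t| + a * |t| ^ (p / (p - 1)) := by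
  have h1' : (0:ℝ) < p - 1 := by linarith
  have hα : (0:ℝ) < 1 / (p - 1) := by positivity
  have hcr : Continuous (fun s : ℝ => a + a * s ^ (1 / (p - 1))) := by
    refine continuous_const.add (continuous_const.mul ?_)
    exact continuous_iff_continuousAt.2 fun x => Real.continuousAt_rpow_const x _ (Or.inr hα.le)
  have key : ∀ t : ℝ, 0 ≤ t → |∫ s in (0:ℝ)..t, h s| ≤ a * t + a * t ^ (p / (p - 1)) := by
    intro t ht
    have step1 : |∫ s in (0:ℝ)..t, h s| ≤ ∫ s in (0:ℝ)..t, |h s| := by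
      simpa [Real.norm_eq_abs] using
        intervalIntegral.norm_integral_le_integral_norm (f := h) (a := 0) (b := t) (μ := volume) ht
    have step2 : ∫ s in (0:ℝ)..t, |h s| ≤ ∫ s in (0:ℝ)..t, (a + a * s ^ (1 / (p - 1))) := by
      refine intervalIntegral.integral_mono_on ht ((hcont.abs).intervalIntegrable _ _)
        (hcr.intervalIntegrable _ _) fun s hs => ?_
      have hs0 : 0 ≤ s := hs.1
      calc |h s| ≤ a * (1 + |s| ^ (1 / (p - 1))) := hgrowth s
        _ = a + a * s ^ (1 / (p - 1)) := by rw [abs_of_nonneg hs0]; ring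
    have step3 : ∫ s in (0:ℝ)..t, (a + a * s ^ (1 / (p - 1)))
        = a * t + a * (t ^ (1 / (p - 1) + 1) / (1 / (p - 1) + 1)) := by
      rw [intervalIntegral.integral_add (intervalIntegrable_const)
        ((show Continuous (fun s : ℝ => a * s ^ (1 / (p - 1))) from continuous_const.mul (continuous_iff_continuousAt.2 fun x =>
          Real.continuousAt_rpow_const x _ (Or.inr hα.le))).intervalIntegrable _ _),
        intervalIntegral.integral_const, intervalIntegral.integral_const_mul,
        integral_rpow (Or.inl (by linarith))]
      rw [Real.zero_rpow (by positivity)]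
      simp [smul_eq_mul, mul_comm]
    have step4 : a * (t ^ (1 / (p - 1) + 1) / (1 / (p - 1) + 1)) ≤ a * t ^ (p / (p - 1)) := by
      have he : 1 / (p - 1) + 1 = p / (p - 1) := by field_simp; ring
      rw [he]
      refine mul_le_mul_of_nonneg_left ?_ (le_of_lt ha)
      refine div_le_self (Real.rpow_nonneg ht _) ?_
      rw [← he]; linarith
    calc |∫ s in (0:ℝ)..t, h s| ≤ ∫ s in (0:ℝ)..t, (a + a * s ^ (1 / (p - 1))) :=
        step1.trans step2
      _ = a * t + a * (t ^ (1 / (p - 1) + 1) / (1 / (p - 1) + 1)) := step3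
      _ ≤ a * t + a * t ^ (p / (p - 1)) := by linarith
  rcases le_or_gt 0 t with ht | ht
  · simpa [abs_of_nonneg ht] using key t ht
  · have := key (-t) (by linarith)
    rw [H_even hodd] at this
    simpa [abs_of_neg ht] using this

lemma integrable_H_comp {p a : ℝ} {h : ℝ → ℝ} (hp : 2 < p) (hcont : Continuous h) (ha : 0 < a)
    (hgrowth : ∀ t : ℝ, |h t| ≤ a * (1 + |t| ^ (1 / (p - 1))))
    (hodd : ∀ t : ℝ, h (-t) = - h t)
    [IsFiniteMeasure μ] {f : α → ℝ} (hf : MemLp f (ENNReal.ofReal (p / (p - 1))) μ) :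
    Integrable (fun x => ∫ s in (0:ℝ)..(f x), h s) μ := by
  have h1' : (0:ℝ) < p - 1 := by linarith
  have hone : (1:ℝ≥0∞) ≤ ENNReal.ofReal (p / (p - 1)) := by
    rw [ENNReal.one_le_ofReal]
    rw [le_div_iff₀ h1']; linarith
  have hint : Integrable (fun x => a * ‖f x‖ + a * ‖f x‖ ^ (p / (p - 1))) μ := by
    refine (((hf.integrable hone).norm.const_mul a).add ?_)
    have := hf.integrable_norm_rpow (by simp; positivity) (by simp)
    rw [ENNReal.toReal_ofReal (by positivity)] at this
    exact this.const_mul a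
  refine hint.mono' ?_ (ae_of_all _ fun x => ?_)
  · have Hcont : Continuous (fun t : ℝ => ∫ s in (0:ℝ)..t, h s) :=
      intervalIntegral.continuous_primitive (fun a b => hcont.intervalIntegrable a b) 0
    exact Hcont.comp_aestronglyMeasurable hf.1
  · rw [Real.norm_eq_abs]
    simpa [Real.norm_eq_abs] using H_bound hp hcont ha hgrowth hodd (f x)

lemma norm_toReal_rpow {r : ℝ} (hr : 1 < r) {f : α → ℝ} (hf : MemLp f (ENNReal.ofReal r) μ) :
    (eLpNorm f (ENNReal.ofReal r) μ).toReal ^ r = ∫ x, ‖f x‖ ^ r ∂μ := by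
  have hr0 : (0:ℝ) < r := by linarith
  rw [MemLp.eLpNorm_eq_integral_rpow_norm (by simp [hr0]) (by simp) hf,
    ENNReal.toReal_ofReal (Real.rpow_nonneg (integral_nonneg fun x => Real.rpow_nonneg (norm_nonneg _) _) _),
    ENNReal.toReal_ofReal hr0.le,
    ← Real.rpow_mul (integral_nonneg fun x => Real.rpow_nonneg (norm_nonneg _) _),
    inv_mul_cancel₀ hr0.ne', Real.rpow_one]


lemma dual_norm_le {p : ℝ} (hp : 2 < p) {f : α → ℝ} (hf : MemLp f (ENNReal.ofReal p) μ)
    {ε : ℝ} (hε : 0 ≤ ε)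
    (hb : ∀ e : α → ℝ, MemLp e (ENNReal.ofReal (p / (p - 1))) μ →
      (eLpNorm e (ENNReal.ofReal (p / (p - 1))) μ).toReal ≤ 1 → |∫ x, f x * e x ∂μ| ≤ ε) :
    (eLpNorm f (ENNReal.ofReal p) μ).toReal ≤ ε := by
  have hp0 : (0:ℝ) < p := by linarith
  have hp1' : (0:ℝ) < p - 1 := by linarith
  have hp2' : (0:ℝ) < p - 2 := by linarith
  set A := ∫ x, ‖f x‖ ^ p ∂μ with hA_def
  have hA0 : 0 ≤ A := integral_nonneg fun x => Real.rpow_nonneg (norm_nonneg _) _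
  have normf : (eLpNorm f (ENNReal.ofReal p) μ).toReal = A ^ (1/p) := by
    rw [MemLp.eLpNorm_eq_integral_rpow_norm (by simp [hp0]) (by simp) hf,
      ENNReal.toReal_ofReal hp0.le, ENNReal.toReal_ofReal (Real.rpow_nonneg hA0 _), one_div]
  rcases eq_or_lt_of_le hA0 with hA | hA
  · rw [normf, ← hA, Real.zero_rpow (by positivity)]
    exact hε
  -- the dual element
  set g₀ : α → ℝ := fun x => |f x| ^ (p-2) * f x with hg₀_def
  have habs : ∀ x, |g₀ x| = |f x| ^ (p-1) := by
    intro x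
    rcases eq_or_ne (f x) 0 with h0 | h0
    · simp [hg₀_def, h0, Real.zero_rpow hp1'.ne', Real.zero_rpow hp2'.ne']
    · have hfx : 0 < |f x| := abs_pos.2 h0
      rw [hg₀_def, abs_mul, abs_of_nonneg (Real.rpow_nonneg (abs_nonneg _) _)]
      rw [show p - 1 = (p-2) + 1 by ring, Real.rpow_add hfx, Real.rpow_one]
  have hmul : ∀ x, f x * g₀ x = |f x| ^ p := by
    intro x
    rcases eq_or_ne (f x) 0 with h0 | h0
    · simp [hg₀_def, h0, Real.zero_rpow hp0.ne']
    · have hfx : 0 < |f x| := abs_pos.2 h0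
      have : f x * (|f x| ^ (p-2) * f x) = |f x| ^ (p-2) * |f x| ^ (2:ℝ) := by
        rw [Real.rpow_two, sq_abs]; ring
      rw [hg₀_def, this, ← Real.rpow_add hfx]
      norm_num
  have hrpow : ∀ x, ‖g₀ x‖ ^ (p/(p-1)) = ‖f x‖ ^ p := by
    intro x
    rw [Real.norm_eq_abs, Real.norm_eq_abs, habs x, ← Real.rpow_mul (abs_nonneg _),
      show (p-1) * (p/(p-1)) = p by field_simp]
  have memg : MemLp g₀ (ENNReal.ofReal (p / (p - 1))) μ := by
    have h2 := hf.norm_rpow_div (ENNReal.ofReal (p - 1))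
    rw [ENNReal.toReal_ofReal hp1'.le, ← ENNReal.ofReal_div_of_pos hp1'] at h2
    refine MemLp.of_le h2 ?_ (ae_of_all _ fun x => ?_)
    · exact (((hf.1.norm.aemeasurable.pow aemeasurable_const).mul
        hf.1.aemeasurable)).aestronglyMeasurable
    · refine le_of_eq ?_
      rw [Real.norm_eq_abs, habs x, Real.norm_eq_abs,
        abs_of_nonneg (Real.rpow_nonneg (norm_nonneg _) _), Real.norm_eq_abs]
  have hA_eq : ∫ x, ‖g₀ x‖ ^ (p/(p-1)) ∂μ = A := integral_congr_ae (ae_of_all _ hrpow)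
  have normg : (eLpNorm g₀ (ENNReal.ofReal (p / (p - 1))) μ).toReal = A ^ ((p-1)/p) := by
    have hq0 : (0:ℝ) < p/(p-1) := by positivity
    rw [MemLp.eLpNorm_eq_integral_rpow_norm (by simp [hq0]) (by simp) memg,
      ENNReal.toReal_ofReal hq0.le, hA_eq,
      ENNReal.toReal_ofReal (Real.rpow_nonneg hA0 _)]
    congr 1
    field_simp
  set c : ℝ := (A ^ ((p-1)/p))⁻¹ with hc_def
  have hApow : 0 < A ^ ((p-1)/p) := Real.rpow_pos_of_pos hA _
  have hc : 0 < c := by positivity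
  set e : α → ℝ := fun x => c * g₀ x with he_def
  have meme : MemLp e (ENNReal.ofReal (p / (p - 1))) μ := memg.const_mul c
  have norme : (eLpNorm e (ENNReal.ofReal (p / (p - 1))) μ).toReal ≤ 1 := by
    have : e = c • g₀ := rfl
    rw [this, eLpNorm_const_smul, ENNReal.toReal_mul, toReal_enorm,
      Real.norm_eq_abs, abs_of_pos hc, normg, hc_def, inv_mul_cancel₀ hApow.ne']
  have hint : ∫ x, f x * e x ∂μ = A ^ (1/p) := by
    have h1 : ∫ x, f x * e x ∂μ = c * ∫ x, f x * g₀ x ∂μ := by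
      rw [← integral_const_mul]
      congr 1; ext x; rw [he_def]; ring
    have h2 : ∫ x, f x * g₀ x ∂μ = A := by
      rw [hA_def]
      refine integral_congr_ae (ae_of_all _ fun x => ?_)
      show f x * g₀ x = ‖f x‖ ^ p
      rw [hmul x, Real.norm_eq_abs]
    have hsplit : A = A ^ ((p-1)/p) * A ^ (1/p) := by
      rw [← Real.rpow_add hA, show (p-1)/p + 1/p = 1 by field_simp; ring, Real.rpow_one]
    have hcA : c * A = A ^ (1/p) := by
      conv_lhs => rw [hsplit]
      exact inv_mul_cancel_left₀ hApow.ne' _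
    rw [h1, h2]
    exact hcA
  have := hb e meme norme
  rw [hint, abs_of_nonneg (Real.rpow_nonneg hA0 _)] at this
  rw [normf]
  exact this


lemma ofReal_conj_mul' {p : ℝ} (hp : 2 < p) :
    ENNReal.ofReal (p / (p - 1)) * ENNReal.ofReal (p - 1) = ENNReal.ofReal p := by
  rw [← ENNReal.ofReal_mul (by
    have : (0:ℝ) < p - 1 := by linarith
    positivity), div_mul_cancel₀]
  linarith

lemma unifIntegrable_dominated {p : ℝ} (hp : 2 < p) [IsFiniteMeasure μ]
    {g f : ℕ → α → ℝ} {δ c : ℝ} (hδ : 0 < δ) (hc : 0 < c)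
    (hg : UnifIntegrable g (ENNReal.ofReal p) μ)
    (hfm : ∀ k, AEStronglyMeasurable (f k) μ)
    (hgm : ∀ k, AEStronglyMeasurable (g k) μ)
    (hbound : ∀ k x, |f k x| ≤ δ + (c * |g k x|) ^ (p - 1)) :
    UnifIntegrable f (ENNReal.ofReal (p / (p - 1))) μ := by
  have hp1' : (0:ℝ) < p - 1 := by linarith
  have hq0 : (0:ℝ) < p / (p - 1) := by positivity
  have hq1 : (1:ℝ) ≤ p / (p - 1) := by rw [le_div_iff₀ hp1']; linarith
  have hPq0 : ENNReal.ofReal (p / (p - 1)) ≠ 0 := by simp [hq0]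
  have hPqt : ENNReal.ofReal (p / (p - 1)) ≠ ∞ := by simp
  have hPq1 : (1:ℝ≥0∞) ≤ ENNReal.ofReal (p / (p - 1)) := ENNReal.one_le_ofReal.2 hq1
  intro ε hε
  set ε₂ : ℝ := ((ε / 2) / (c ^ (p - 1) + 1)) ^ (1 / (p - 1)) with hε₂_def
  have hcp : (0:ℝ) < c ^ (p - 1) := Real.rpow_pos_of_pos hc _
  have hε₂pos : 0 < ε₂ := Real.rpow_pos_of_pos (by positivity) _
  obtain ⟨δ₁, hδ₁pos, H₁⟩ := hg hε₂pos
  set δ₂ : ℝ := ((ε / 2) / (δ + 1)) ^ (p / (p - 1)) with hδ₂_def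
  have hδ₂pos : 0 < δ₂ := Real.rpow_pos_of_pos (by positivity) _
  refine ⟨min δ₁ δ₂, lt_min hδ₁pos hδ₂pos, fun k s hs hμs => ?_⟩
  have hμs₁ : μ s ≤ ENNReal.ofReal δ₁ :=
    hμs.trans (ENNReal.ofReal_le_ofReal (min_le_left _ _))
  have hμs₂ : μ s ≤ ENNReal.ofReal δ₂ :=
    hμs.trans (ENNReal.ofReal_le_ofReal (min_le_right _ _))
  set B : α → ℝ := fun x => (c * |g k x|) ^ (p - 1) with hB_def
  have hrc : Continuous (fun y : ℝ => y ^ (p - 1)) :=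
    continuous_iff_continuousAt.2 fun x => Real.continuousAt_rpow_const x _ (Or.inr hp1'.le)
  have hBcont : Continuous (fun y : ℝ => (c * |y|) ^ (p - 1)) :=
    hrc.comp (continuous_const.mul continuous_abs)
  have hBm : AEStronglyMeasurable B μ := hBcont.comp_aestronglyMeasurable (hgm k)
  have e1 : eLpNorm (s.indicator (f k)) (ENNReal.ofReal (p / (p - 1))) μ ≤
      eLpNorm (s.indicator (fun x => δ + B x)) (ENNReal.ofReal (p / (p - 1))) μ := by
    refine eLpNorm_mono fun x => ?_
    by_cases hx : x ∈ s
    · rw [Set.indicator_of_mem hx, Set.indicator_of_mem hx, Real.norm_eq_abs, Real.norm_eq_abs]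
      have hBnn : (0:ℝ) ≤ B x := Real.rpow_nonneg (by positivity) _
      rw [abs_of_nonneg (by linarith : (0:ℝ) ≤ δ + B x)]
      exact hbound k x
    · rw [Set.indicator_of_notMem hx, Set.indicator_of_notMem hx]
  have e2 : s.indicator (fun x => δ + B x) =
      s.indicator (fun _ => δ) + s.indicator B := by
    funext x
    by_cases hx : x ∈ s <;>
      simp [Set.indicator_of_mem, Set.indicator_of_notMem, hx]
  have e3 : eLpNorm (s.indicator (fun _ : α => δ) + s.indicator B) (ENNReal.ofReal (p / (p - 1))) μ
      ≤ eLpNorm (s.indicator (fun _ : α => δ)) (ENNReal.ofReal (p / (p - 1))) μ +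
      eLpNorm (s.indicator B) (ENNReal.ofReal (p / (p - 1))) μ :=
    eLpNorm_add_le (aestronglyMeasurable_const.indicator hs) (hBm.indicator hs) hPq1
  have bound1 : eLpNorm (s.indicator (fun _ : α => δ)) (ENNReal.ofReal (p / (p - 1))) μ ≤
      ENNReal.ofReal (ε / 2) := by
    rw [eLpNorm_indicator_const hs hPq0 hPqt]
    have h1 : (↑‖δ‖₊ : ℝ≥0∞) = ENNReal.ofReal δ := Real.enorm_eq_ofReal hδ.le
    have h2 : μ s ^ (1 / (ENNReal.ofReal (p / (p - 1))).toReal) ≤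
        ENNReal.ofReal ((ε / 2) / (δ + 1)) := by
      rw [ENNReal.toReal_ofReal hq0.le]
      calc μ s ^ (1 / (p / (p - 1))) ≤ (ENNReal.ofReal δ₂) ^ (1 / (p / (p - 1))) :=
            ENNReal.rpow_le_rpow hμs₂ (by positivity)
        _ = ENNReal.ofReal ((ε / 2) / (δ + 1)) := by
            rw [ENNReal.ofReal_rpow_of_nonneg hδ₂pos.le (by positivity), hδ₂_def,
              ← Real.rpow_mul (by positivity), mul_one_div, div_self hq0.ne', Real.rpow_one]
    calc (↑‖δ‖₊ : ℝ≥0∞) * μ s ^ (1 / (ENNReal.ofReal (p / (p - 1))).toReal)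
        ≤ ENNReal.ofReal δ * ENNReal.ofReal ((ε / 2) / (δ + 1)) := by
          rw [h1]; exact mul_le_mul' le_rfl h2
      _ = ENNReal.ofReal (δ * ((ε / 2) / (δ + 1))) := (ENNReal.ofReal_mul hδ.le).symm
      _ ≤ ENNReal.ofReal (ε / 2) := by
          refine ENNReal.ofReal_le_ofReal ?_
          have hδ1 : (0:ℝ) < δ + 1 := by linarith
          rw [mul_comm, div_mul_eq_mul_div, div_le_iff₀ hδ1]
          nlinarith [hε.le]
  have e4 : s.indicator B = fun x => (c * ‖s.indicator (g k) x‖) ^ (p - 1) := by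
    funext x
    by_cases hx : x ∈ s
    · rw [Set.indicator_of_mem hx, Set.indicator_of_mem hx, hB_def, Real.norm_eq_abs]
    · rw [Set.indicator_of_notMem hx, Set.indicator_of_notMem hx, norm_zero, mul_zero,
        Real.zero_rpow hp1'.ne']
  have e5 : (fun x => (c * ‖s.indicator (g k) x‖) ^ (p - 1)) =
      (c ^ (p - 1)) • (fun x => ‖s.indicator (g k) x‖ ^ (p - 1)) := by
    funext x
    simp only [Pi.smul_apply, smul_eq_mul]
    rw [Real.mul_rpow hc.le (norm_nonneg _)]
  have bound2 : eLpNorm (s.indicator B) (ENNReal.ofReal (p / (p - 1))) μ ≤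
      ENNReal.ofReal (ε / 2) := by
    rw [e4, e5, eLpNorm_const_smul, eLpNorm_norm_rpow _ hp1', ofReal_conj_mul' hp]
    have h4 : eLpNorm (s.indicator (g k)) (ENNReal.ofReal p) μ ≤ ENNReal.ofReal ε₂ :=
      H₁ k s hs hμs₁
    calc (↑‖c ^ (p - 1)‖₊ : ℝ≥0∞) * eLpNorm (s.indicator (g k)) (ENNReal.ofReal p) μ ^ (p - 1)
        ≤ ENNReal.ofReal (c ^ (p - 1)) * (ENNReal.ofReal ε₂) ^ (p - 1) :=
          mul_le_mul' (le_of_eq (Real.enorm_eq_ofReal hcp.le))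
            (ENNReal.rpow_le_rpow h4 hp1'.le)
      _ = ENNReal.ofReal (c ^ (p - 1) * ε₂ ^ (p - 1)) := by
          rw [ENNReal.ofReal_rpow_of_nonneg hε₂pos.le hp1'.le, ← ENNReal.ofReal_mul hcp.le]
      _ ≤ ENNReal.ofReal (ε / 2) := by
          refine ENNReal.ofReal_le_ofReal ?_
          have hεp : ε₂ ^ (p - 1) = (ε / 2) / (c ^ (p - 1) + 1) := by
            rw [hε₂_def, ← Real.rpow_mul (by positivity), one_div_mul_cancel hp1'.ne',
              Real.rpow_one]
          rw [hεp]
          have hc1 : (0:ℝ) < c ^ (p - 1) + 1 := by linarith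
          rw [mul_comm, div_mul_eq_mul_div, div_le_iff₀ hc1]
          nlinarith [hε.le]
  calc eLpNorm (s.indicator (f k)) (ENNReal.ofReal (p / (p - 1))) μ
      ≤ eLpNorm (s.indicator (fun x => δ + B x)) (ENNReal.ofReal (p / (p - 1))) μ := e1
    _ ≤ eLpNorm (s.indicator (fun _ : α => δ)) (ENNReal.ofReal (p / (p - 1))) μ +
        eLpNorm (s.indicator B) (ENNReal.ofReal (p / (p - 1))) μ := by rw [e2]; exact e3
    _ ≤ ENNReal.ofReal (ε / 2) + ENNReal.ofReal (ε / 2) := add_le_add bound1 bound2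
    _ = ENNReal.ofReal ε := by rw [← ENNReal.ofReal_add (by positivity) (by positivity), add_halves]


end Stmt13

open MeasureTheory

set_option maxHeartbeats 1000000 in
set_option synthInstance.maxHeartbeats 1000000 in
theorem stmt_13 (N : ℕ) (Ω : Set (Fin N → ℝ)) (hΩmeas : MeasurableSet Ω)
    (hΩpos : 0 < volume Ω) (hΩfin : volume Ω < ⊤)
    (p q : ℝ) (hp : 2 < p) (hq2 : 2 < q) (hqp : q ≤ p)
    [Fact (1 ≤ ENNReal.ofReal (p / (p - 1)))] [Fact (1 ≤ ENNReal.ofReal p)]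
    (T : Lp ℝ (ENNReal.ofReal (p / (p - 1))) (volume.restrict Ω) →L[ℝ] Lp ℝ (ENNReal.ofReal p) (volume.restrict Ω))
    (hTcompact : IsCompactOperator (⇑T))
    (h : ℝ → ℝ) (hcont : Continuous h) (hodd : ∀ t : ℝ, h (-t) = - h t)
    (hmono : StrictMono h) (hbij : Function.Bijective h)
    (a : ℝ) (ha : 0 < a) (hgrowth : ∀ t : ℝ, |h t| ≤ a * (1 + |t| ^ (1 / (p - 1))))
    (M₁ M₂ δ : ℝ) (hM₁ : 0 < M₁) (hM₂ : 0 < M₂) (hδ : 0 < δ)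
    (hlow1 : ∀ t : ℝ, δ < |t| → M₁ * |t| ^ (1 / (p - 1)) ≤ |h t|)
    (hlow2 : ∀ t : ℝ, |t| ≤ δ → M₂ * |t| ^ (1 / (q - 1)) ≤ |h t|)
    (Ψ : Lp ℝ (ENNReal.ofReal (p / (p - 1))) (volume.restrict Ω) → ℝ)
    (hΨ : ∀ w : Lp ℝ (ENNReal.ofReal (p / (p - 1))) (volume.restrict Ω),
      Ψ w = (∫ x, (∫ s in (0:ℝ)..(w x), h s) ∂(volume.restrict Ω)) - (1 / 2) * ∫ x, w x * T w x ∂(volume.restrict Ω))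
    (C Ctil : ℝ) (hC : 0 < C) (hCtil : 0 ≤ Ctil)
    (hlower : ∀ t : ℝ,
      C * |t| ^ (p / (p - 1)) - Ctil ≤ (∫ s in (0:ℝ)..t, h s) - (1 / 2) * h t * t)
    (w : ℕ → Lp ℝ (ENNReal.ofReal (p / (p - 1))) (volume.restrict Ω)) (c : ℝ)
    (hPS1 : Filter.Tendsto (fun n => Ψ (w n)) Filter.atTop (nhds c))
    (hPS2 : ∀ ε : ℝ, 0 < ε → ∃ n₀ : ℕ, ∀ n ≥ n₀,
      ∀ η : Lp ℝ (ENNReal.ofReal (p / (p - 1))) (volume.restrict Ω), ‖η‖ ≤ 1 →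
        |∫ x, (h (w n x) - T (w n) x) * η x ∂(volume.restrict Ω)| ≤ ε) :
    ∃ φ : ℕ → ℕ, StrictMono φ ∧
      ∃ wlim : Lp ℝ (ENNReal.ofReal (p / (p - 1))) (volume.restrict Ω),
        Filter.Tendsto (fun n => w (φ n)) Filter.atTop (nhds wlim) := by
  classical
  haveI : IsFiniteMeasure (volume.restrict Ω) := ⟨by rwa [Measure.restrict_apply_univ]⟩
  have hp1' : (0:ℝ) < p - 1 := by linarith
  have hq0 : (0:ℝ) < p / (p - 1) := by positivity
  have hq1 : (1:ℝ) < p / (p - 1) := by rw [lt_div_iff₀ hp1']; linarith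
  have hPq0 : ENNReal.ofReal (p / (p - 1)) ≠ 0 := by simp [hq0]
  have hPqt : ENNReal.ofReal (p / (p - 1)) ≠ ∞ := by simp
  have hPq1 : (1:ℝ≥0∞) ≤ ENNReal.ofReal (p / (p - 1)) := ENNReal.one_le_ofReal.2 hq1.le
  have hP0 : ENNReal.ofReal p ≠ 0 := by simp; linarith
  have hP1 : (1:ℝ≥0∞) ≤ ENNReal.ofReal p := ENNReal.one_le_ofReal.2 (by linarith)
  -- `h ∘ w n` lies in `L^p`
  have memh : ∀ n, MemLp (fun x => h (w n x)) (ENNReal.ofReal p) (volume.restrict Ω) := fun n =>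
    Stmt13.memLp_h_comp hp hcont ha hgrowth (Lp.memLp (w n))
  have memf : ∀ n, MemLp (fun x => h (w n x) - T (w n) x) (ENNReal.ofReal p) (volume.restrict Ω) := fun n =>
    (memh n).sub (Lp.memLp (T (w n)))
  -- the gap `h(wₙ) - T wₙ` tends to 0 in L^p, via duality
  have hgap : ∀ ε : ℝ, 0 < ε → ∃ n₀ : ℕ, ∀ n ≥ n₀,
      (eLpNorm (fun x => h (w n x) - T (w n) x) (ENNReal.ofReal p) (volume.restrict Ω)).toReal ≤ ε := by
    intro ε hε
    obtain ⟨n₀, hn₀⟩ := hPS2 ε hε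
    refine ⟨n₀, fun n hn => ?_⟩
    refine Stmt13.dual_norm_le hp (memf n) hε.le (fun e he hnorm => ?_)
    have hηnorm : ‖he.toLp e‖ ≤ 1 := by rw [Lp.norm_toLp]; exact hnorm
    have hb := hn₀ n hn (he.toLp e) hηnorm
    have heq : ∫ x, (h (w n x) - T (w n) x) * (he.toLp e) x ∂(volume.restrict Ω)
        = ∫ x, (h (w n x) - T (w n) x) * e x ∂(volume.restrict Ω) := by
      refine integral_congr_ae ?_
      filter_upwards [he.coeFn_toLp] with x hx
      rw [hx]
    rwa [heq] at hb
  -- the pairing with wₙ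
  set D : ℕ → ℝ := fun n => ∫ x, (h (w n x) - T (w n) x) * (w n x) ∂(volume.restrict Ω) with hD_def
  obtain ⟨n₁, hn₁⟩ := hPS2 1 one_pos
  have hDle : ∀ n, n₁ ≤ n → |D n| ≤ ‖w n‖ := by
    intro n hn
    rcases eq_or_ne (w n) 0 with h0 | h0
    · have hz : D n = 0 := by
        rw [hD_def]
        have hc : (⇑(w n) : _ → ℝ) =ᵐ[volume.restrict Ω] 0 := by rw [h0]; exact Lp.coeFn_zero _ _ _
        rw [show (0:ℝ) = ∫ x, (0:ℝ) ∂(volume.restrict Ω) by simp]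
        refine integral_congr_ae ?_
        filter_upwards [hc] with x hx
        simp [hx]
      rw [hz, h0]; simp
    · have hwpos : 0 < ‖w n‖ := norm_pos_iff.2 h0
      have hηnorm : ‖(‖w n‖⁻¹ : ℝ) • w n‖ ≤ 1 := by
        rw [norm_smul, Real.norm_eq_abs, abs_of_pos (inv_pos.2 hwpos),
          inv_mul_cancel₀ hwpos.ne']
      have hb := hn₁ n hn ((‖w n‖⁻¹ : ℝ) • w n) hηnorm
      have heq : ∫ x, (h (w n x) - T (w n) x) * (((‖w n‖⁻¹ : ℝ) • w n) x) ∂(volume.restrict Ω)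
          = ‖w n‖⁻¹ * D n := by
        rw [hD_def, ← integral_const_mul]
        refine integral_congr_ae ?_
        filter_upwards [Lp.coeFn_smul (‖w n‖⁻¹ : ℝ) (w n)] with x hx
        rw [hx]
        simp only [Pi.smul_apply, smul_eq_mul]
        ring
      rw [heq, abs_mul, abs_of_pos (inv_pos.2 hwpos)] at hb
      calc |D n| = ‖w n‖ * (‖w n‖⁻¹ * |D n|) := by field_simp
        _ ≤ ‖w n‖ * 1 := mul_le_mul_of_nonneg_left hb hwpos.le
        _ = ‖w n‖ := mul_one _
  -- the key coercivity inequality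
  set m : ℝ := ((volume.restrict Ω) Set.univ).toReal with hm_def
  have hm0 : 0 ≤ m := ENNReal.toReal_nonneg
  have hkey : ∀ n, C * ‖w n‖ ^ (p/(p-1)) ≤ Ψ (w n) - (1/2) * D n + Ctil * m := by
    intro n
    have memW := Lp.memLp (w n)
    have I1 : Integrable (fun x => ∫ s in (0:ℝ)..(w n x), h s) (volume.restrict Ω) :=
      Stmt13.integrable_H_comp hp hcont ha hgrowth hodd memW
    have I2 : Integrable (fun x => h (w n x) * (w n x)) (volume.restrict Ω) :=
      Stmt13.integrable_mul_conj hp (memh n) memW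
    have I2' : Integrable (fun x => 1/2 * h (w n x) * (w n x)) (volume.restrict Ω) := by
      have h2 := I2.const_mul (1/2)
      simpa [mul_assoc] using h2
    have I3 : Integrable (fun x => (T (w n)) x * (w n x)) (volume.restrict Ω) :=
      Stmt13.integrable_mul_conj hp (Lp.memLp (T (w n))) memW
    have Irp : Integrable (fun x => ‖w n x‖ ^ (p/(p-1))) (volume.restrict Ω) := by
      have h2 := memW.integrable_norm_rpow hPq0 hPqt
      rwa [ENNReal.toReal_ofReal hq0.le] at h2
    have mono : ∫ x, (C * ‖w n x‖ ^ (p/(p-1)) - Ctil) ∂(volume.restrict Ω) ≤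
        ∫ x, ((∫ s in (0:ℝ)..(w n x), h s) - 1/2 * h (w n x) * (w n x)) ∂(volume.restrict Ω) := by
      refine integral_mono ((Irp.const_mul C).sub (integrable_const Ctil)) (I1.sub I2') fun x => ?_
      have hl := hlower (w n x)
      simp only [Real.norm_eq_abs]
      linarith [hl]
    have lhs_eq : ∫ x, (C * ‖w n x‖ ^ (p/(p-1)) - Ctil) ∂(volume.restrict Ω)
        = C * ∫ x, ‖w n x‖ ^ (p/(p-1)) ∂(volume.restrict Ω) - Ctil * m := by
      rw [integral_sub (Irp.const_mul C) (integrable_const Ctil), integral_const_mul,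
        integral_const, smul_eq_mul]
      show _ = _ - Ctil * (volume.restrict Ω).real Set.univ
      ring
    have rhs_eq : ∫ x, ((∫ s in (0:ℝ)..(w n x), h s) - 1/2 * h (w n x) * (w n x)) ∂(volume.restrict Ω)
        = (∫ x, (∫ s in (0:ℝ)..(w n x), h s) ∂(volume.restrict Ω)) - 1/2 * ∫ x, h (w n x) * (w n x) ∂(volume.restrict Ω) := by
      rw [integral_sub I1 I2']
      congr 1
      rw [← integral_const_mul]
      exact integral_congr_ae (ae_of_all _ fun x => by ring)
    have hD_eq : D n = (∫ x, h (w n x) * (w n x) ∂(volume.restrict Ω)) - ∫ x, (T (w n)) x * (w n x) ∂(volume.restrict Ω) := by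
      rw [hD_def, ← integral_sub I2 I3]
      exact integral_congr_ae (ae_of_all _ fun x => by ring)
    have hcomm : ∫ x, (w n x) * (T (w n)) x ∂(volume.restrict Ω) = ∫ x, (T (w n)) x * (w n x) ∂(volume.restrict Ω) :=
      integral_congr_ae (ae_of_all _ fun x => by ring)
    have hΨn := hΨ (w n)
    have hnorm_eq : ∫ x, ‖w n x‖ ^ (p/(p-1)) ∂(volume.restrict Ω) = ‖w n‖ ^ (p/(p-1)) := by
      rw [← Stmt13.norm_toReal_rpow hq1 memW, Lp.norm_def]
    rw [lhs_eq, rhs_eq, hnorm_eq] at mono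
    linarith [mono]
  -- uniform bound on ‖w n‖
  obtain ⟨U, hU⟩ := hPS1.bddAbove_range
  have hUb : ∀ n, Ψ (w n) ≤ U := fun n => hU ⟨n, rfl⟩
  set A₀ : ℝ := max U 0 + Ctil * m with hA₀_def
  have hA₀0 : 0 ≤ A₀ := add_nonneg (le_max_right _ _) (mul_nonneg hCtil hm0)
  have hbound1 : ∀ n, n₁ ≤ n → ‖w n‖ ≤ max ((2/C) ^ (p-1)) A₀ := by
    intro n hn
    have hr0 : (0:ℝ) ≤ ‖w n‖ := norm_nonneg _
    have hA : C * ‖w n‖ ^ (p/(p-1)) ≤ A₀ + (1/2) * ‖w n‖ := by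
      have h1 := hkey n
      have h2 := hDle n hn
      have h3 : Ψ (w n) ≤ max U 0 := le_trans (hUb n) (le_max_left _ _)
      have h4 : - ((1/2) * D n) ≤ (1/2) * ‖w n‖ := by
        have h5 := neg_abs_le (D n)
        linarith [h2]
      linarith
    by_cases hcase : ‖w n‖ ≤ (2/C) ^ (p-1)
    · exact le_trans hcase (le_max_left _ _)
    · push_neg at hcase
      have hK0 : (0:ℝ) < (2/C) ^ (p-1) := Real.rpow_pos_of_pos (by positivity) _
      have hrpos : 0 < ‖w n‖ := lt_trans hK0 hcase
      have hsplit : ‖w n‖ ^ (p/(p-1)) = ‖w n‖ ^ (1/(p-1)) * ‖w n‖ := by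
        have h7 : ‖w n‖ ^ (1/(p-1) + 1) = ‖w n‖ ^ (1/(p-1)) * ‖w n‖ := by
          rw [Real.rpow_add hrpos, Real.rpow_one]
        rw [← h7]
        congr 1
        field_simp
        ring
      have hge : (2/C) ≤ ‖w n‖ ^ (1/(p-1)) := by
        have h6 := Real.rpow_le_rpow hK0.le hcase.le
          (le_of_lt (by positivity : (0:ℝ) < 1/(p-1)))
        rwa [← Real.rpow_mul (by positivity : (0:ℝ) ≤ 2/C), mul_one_div,
          div_self hp1'.ne', Real.rpow_one] at h6
      have h2r : 2 * ‖w n‖ ≤ C * ‖w n‖ ^ (p/(p-1)) := by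
        calc 2 * ‖w n‖ = C * ((2/C) * ‖w n‖) := by field_simp
          _ ≤ C * (‖w n‖ ^ (1/(p-1)) * ‖w n‖) := by
              refine mul_le_mul_of_nonneg_left (mul_le_mul_of_nonneg_right hge hrpos.le) hC.le
          _ = C * ‖w n‖ ^ (p/(p-1)) := by rw [← hsplit]
      have h7 : ‖w n‖ ≤ A₀ := by linarith
      exact le_trans h7 (le_max_right _ _)
  have hrange : (Finset.range (n₁+1)).Nonempty := ⟨0, by simp⟩
  set R : ℝ := max (max ((2/C) ^ (p-1)) A₀)
      ((Finset.range (n₁+1)).sup' hrange fun i => ‖w i‖) with hR_def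
  have hR : ∀ n, ‖w n‖ ≤ R := by
    intro n
    rcases le_or_gt n₁ n with hn | hn
    · exact le_trans (hbound1 n hn) (le_max_left _ _)
    · refine le_trans ?_ (le_max_right _ _)
      exact Finset.le_sup' (f := fun i => ‖w i‖) (Finset.mem_range.2 (by omega))
  have hR0 : 0 ≤ R := le_trans (norm_nonneg (w 0)) (hR 0)
  -- compactness: extract a subsequence along which T wₙ converges
  obtain ⟨K, hKcomp, hKmem⟩ := hTcompact
  obtain ⟨r₀, hr₀, hball⟩ := Metric.mem_nhds_iff.1 hKmem
  set c₀ : ℝ := r₀ / (2 * (R + 1)) with hc₀_def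
  have hc₀ : 0 < c₀ := div_pos hr₀ (by linarith)
  have hmemK : ∀ n, T (c₀ • w n) ∈ K := by
    intro n
    apply hball
    rw [mem_ball_zero_iff, norm_smul, Real.norm_eq_abs, abs_of_pos hc₀]
    calc c₀ * ‖w n‖ ≤ c₀ * R := mul_le_mul_of_nonneg_left (hR n) hc₀.le
      _ < c₀ * (2*(R+1)) := by nlinarith
      _ = r₀ := by rw [hc₀_def]; field_simp
  obtain ⟨v₀, -, φ₁, hφ₁, hconv⟩ := hKcomp.tendsto_subseq hmemK
  have hTv : Filter.Tendsto (fun n => T (w (φ₁ n))) Filter.atTop (nhds (c₀⁻¹ • v₀)) := by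
    have h1 := hconv.const_smul (c₀⁻¹)
    refine h1.congr fun n => ?_
    show c₀⁻¹ • T (c₀ • w (φ₁ n)) = T (w (φ₁ n))
    rw [← ContinuousLinearMap.map_smul, smul_smul, inv_mul_cancel₀ hc₀.ne', one_smul]
  set v := c₀⁻¹ • v₀ with hv_def
  -- gL n : L^p representative of h ∘ w n
  set gL : ℕ → Lp ℝ (ENNReal.ofReal p) (volume.restrict Ω) := fun n => (memh n).toLp _ with hgL_def
  have hnorm_gap : ∀ n, ‖gL n - T (w n)‖ =
      (eLpNorm (fun x => h (w n x) - T (w n) x) (ENNReal.ofReal p) (volume.restrict Ω)).toReal := by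
    intro n
    rw [Lp.norm_def]
    congr 1
    apply eLpNorm_congr_ae
    filter_upwards [Lp.coeFn_sub (gL n) (T (w n)), (memh n).coeFn_toLp] with x h1 h2
    rw [h1, Pi.sub_apply, h2]
  have htend0 : Filter.Tendsto (fun n => ‖gL n - T (w n)‖) Filter.atTop (nhds 0) := by
    rw [Metric.tendsto_atTop]
    intro ε hε
    obtain ⟨n₀, hn₀⟩ := hgap (ε/2) (by linarith)
    refine ⟨n₀, fun n hn => ?_⟩
    rw [Real.dist_eq, sub_zero, abs_of_nonneg (norm_nonneg _), hnorm_gap n]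
    calc _ ≤ ε/2 := hn₀ n hn
      _ < ε := by linarith
  have hgconv : Filter.Tendsto (fun n => gL (φ₁ n)) Filter.atTop (nhds v) := by
    have h1 : Filter.Tendsto (fun n => gL (φ₁ n) - T (w (φ₁ n))) Filter.atTop (nhds 0) := by
      rw [tendsto_zero_iff_norm_tendsto_zero]
      exact htend0.comp hφ₁.tendsto_atTop
    have h2 := h1.add hTv
    rw [hv_def]
    simpa using h2
  set F : ℕ → (Fin N → ℝ) → ℝ := fun n x => h (w (φ₁ n) x) with hF_def
  have heLpconv : Filter.Tendsto (fun n => eLpNorm (F n - ⇑v) (ENNReal.ofReal p) (volume.restrict Ω))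
      Filter.atTop (nhds 0) := by
    have heq : ∀ n, eLpNorm (F n - ⇑v) (ENNReal.ofReal p) (volume.restrict Ω)
        = ENNReal.ofReal ‖gL (φ₁ n) - v‖ := by
      intro n
      rw [Lp.norm_def, ENNReal.ofReal_toReal (Lp.eLpNorm_ne_top _)]
      apply eLpNorm_congr_ae
      filter_upwards [Lp.coeFn_sub (gL (φ₁ n)) v, (memh (φ₁ n)).coeFn_toLp] with x h1 h2
      rw [Pi.sub_apply, h1, Pi.sub_apply, h2]
    simp_rw [heq]
    have hnt : Filter.Tendsto (fun n => ‖gL (φ₁ n) - v‖) Filter.atTop (nhds 0) :=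
      tendsto_iff_norm_sub_tendsto_zero.1 hgconv
    have h3 := ENNReal.tendsto_ofReal hnt
    simpa using h3
  have hmeasconv : TendstoInMeasure (volume.restrict Ω) F Filter.atTop ⇑v :=
    tendstoInMeasure_of_tendsto_eLpNorm hP0 (fun n => (memh (φ₁ n)).1)
      (Lp.aestronglyMeasurable v) heLpconv
  obtain ⟨ψ, hψ, hae⟩ := hmeasconv.exists_seq_tendsto_ae
  -- inverse of h
  set e := hmono.orderIsoOfSurjective h hbij.2 with he_def
  have hinv_cont : Continuous fun y => e.symm y := e.toHomeomorph.symm.continuous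
  have h_of_inv : ∀ y, h (e.symm y) = y := fun y => e.apply_symm_apply y
  have hinv_of : ∀ t, e.symm (h t) = t := fun t => e.symm_apply_apply t
  set u : (Fin N → ℝ) → ℝ := fun x => e.symm (v x) with hu_def
  -- pointwise domination
  have habs_le : ∀ t : ℝ, |t| ≤ δ + (M₁⁻¹ * |h t|) ^ (p - 1) := by
    intro t
    have hnn : 0 ≤ (M₁⁻¹ * |h t|) ^ (p-1) := Real.rpow_nonneg (by positivity) _
    by_cases hc1 : |t| ≤ δ
    · linarith
    · push_neg at hc1
      have hl := hlow1 t hc1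
      have h1 : |t| ^ (1/(p-1)) ≤ M₁⁻¹ * |h t| := by
        rw [← div_eq_inv_mul, le_div_iff₀ hM₁]
        linarith
      have h2 : |t| = (|t| ^ (1/(p-1))) ^ (p-1) := by
        rw [← Real.rpow_mul (abs_nonneg t), one_div_mul_cancel hp1'.ne', Real.rpow_one]
      rw [h2]
      have h3 := Real.rpow_le_rpow (Real.rpow_nonneg (abs_nonneg t) _) h1 hp1'.le
      linarith
  have humem : MemLp u (ENNReal.ofReal (p/(p-1))) (volume.restrict Ω) := by
    have memv := Lp.memLp v
    have h2 := memv.norm_rpow_div (ENNReal.ofReal (p-1))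
    rw [ENNReal.toReal_ofReal hp1'.le, ← ENNReal.ofReal_div_of_pos hp1'] at h2
    have memG : MemLp (fun x => δ + M₁⁻¹ ^ (p-1) * ‖v x‖ ^ (p-1))
        (ENNReal.ofReal (p/(p-1))) (volume.restrict Ω) := (memLp_const δ).add (h2.const_mul _)
    refine MemLp.of_le memG (hinv_cont.comp_aestronglyMeasurable (Lp.aestronglyMeasurable v))
      (ae_of_all _ fun x => ?_)
    have hb1 : |u x| ≤ δ + (M₁⁻¹ * |h (u x)|) ^ (p-1) := habs_le (u x)
    have hhu : h (u x) = v x := h_of_inv (v x)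
    rw [hhu] at hb1
    have hrw : (M₁⁻¹ * |v x|) ^ (p-1) = M₁⁻¹ ^ (p-1) * ‖v x‖ ^ (p-1) := by
      rw [Real.mul_rpow (by positivity) (abs_nonneg _), Real.norm_eq_abs]
    rw [hrw] at hb1
    have hrhs : (0:ℝ) ≤ δ + M₁⁻¹ ^ (p-1) * ‖v x‖ ^ (p-1) := by positivity
    rw [Real.norm_eq_abs, Real.norm_of_nonneg hrhs]
    exact hb1
  set wlim := humem.toLp u with hwlim_def
  set σ : ℕ → ℕ := fun k => φ₁ (ψ k) with hσ_def
  have hUIg : UnifIntegrable (fun k => F (ψ k)) (ENNReal.ofReal p) (volume.restrict Ω) :=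
    unifIntegrable_of_tendsto_Lp hP1 (by simp) (fun k => memh _) (Lp.memLp v)
      (heLpconv.comp hψ.tendsto_atTop)
  have hUI : UnifIntegrable (fun k => (⇑(w (σ k)) : (Fin N → ℝ) → ℝ))
      (ENNReal.ofReal (p/(p-1))) (volume.restrict Ω) :=
    Stmt13.unifIntegrable_dominated hp hδ (inv_pos.2 hM₁) hUIg
      (fun k => Lp.aestronglyMeasurable _) (fun k => (memh _).1) (fun k x => habs_le _)
  have hae' : ∀ᵐ x ∂(volume.restrict Ω), Filter.Tendsto (fun k => w (σ k) x) Filter.atTop (nhds (u x)) := by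
    filter_upwards [hae] with x hx
    have h1 : Filter.Tendsto (fun k => e.symm (h (w (σ k) x))) Filter.atTop
        (nhds (e.symm (v x))) := ((hinv_cont.tendsto _).comp hx)
    simpa [hinv_of] using h1
  have hVit : Filter.Tendsto
      (fun k => eLpNorm ((fun x => w (σ k) x) - u) (ENNReal.ofReal (p/(p-1))) (volume.restrict Ω))
      Filter.atTop (nhds 0) :=
    tendsto_Lp_finite_of_tendsto_ae hPq1 hPqt (fun k => Lp.aestronglyMeasurable _)
      humem hUI hae'
  refine ⟨σ, hφ₁.comp hψ, wlim, ?_⟩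
  rw [tendsto_iff_norm_sub_tendsto_zero]
  have heq2 : ∀ k, ‖w (σ k) - wlim‖ =
      (eLpNorm ((fun x => w (σ k) x) - u) (ENNReal.ofReal (p/(p-1))) (volume.restrict Ω)).toReal := by
    intro k
    rw [Lp.norm_def]
    congr 1
    apply eLpNorm_congr_ae
    filter_upwards [Lp.coeFn_sub (w (σ k)) wlim, humem.coeFn_toLp] with x h1 h2
    rw [h1, Pi.sub_apply, Pi.sub_apply, h2]
  simp_rw [heq2]
  have h3 := (ENNReal.tendsto_toReal (a := 0) (by simp)).comp hVit
  rw [ENNReal.toReal_zero] at h3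
  exact h3
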